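/- For a minimal dynamical system (X,T), the proximal relation on X is transitive if and only if the little structure group Γ_e of the Ellis semigroup is trivial. -/

import Mathlib

/-- The Ellis semigroup of the action. -/
def Ellis (T : Type*) (X : Type*) [TopologicalSpace X] [SMul T X] : Set (X → X) :=
  closure (Set.range fun t : T => fun x : X => t • x)

/-- A two-sided ideal of a sub-semigroup `E` of `X → X` under composition. -/
def IsIdealIn {X : Type*} (E I : Set (X → X)) : Prop :=
  I ⊆ E ∧ I.Nonempty ∧ ∀ f ∈ E, ∀ g ∈ I, f ∘ g ∈ I ∧ g ∘ f ∈ I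

/-- A minimal idempotent of `E`: an idempotent belonging to every two-sided ideal. -/
def IsMinIdem {X : Type*} (E : Set (X → X)) (p : X → X) : Prop :=
  p ∈ E ∧ p ∘ p = p ∧ ∀ I : Set (X → X), IsIdealIn E I → p ∈ I

/-- The proximal relation. -/
def Proximal (T : Type*) {X : Type*} [MetricSpace X] [SMul T X] (x y : X) : Prop :=
  ∀ ε > 0, ∃ t : T, dist (t • x) (t • y) < ε

/- ============================================================
   Auxiliary development
   ============================================================ -/

/-- A left ideal of the Ellis semigroup. -/
def LIdeal (T : Type*) [Group T] {X : Type*} [TopologicalSpace X] [SMul T X]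
    (I : Set (X → X)) : Prop :=
  I ⊆ Ellis T X ∧ I.Nonempty ∧ ∀ f ∈ Ellis T X, ∀ g ∈ I, f ∘ g ∈ I

/-- A minimal left ideal of the Ellis semigroup. -/
def MinLIdeal (T : Type*) [Group T] {X : Type*} [TopologicalSpace X] [SMul T X]
    (M : Set (X → X)) : Prop :=
  LIdeal T M ∧ ∀ I : Set (X → X), LIdeal T I → I ⊆ M → I = M

/-- The principal left ideal `E ∘ g`. -/
def lset (T : Type*) [Group T] {X : Type*} [TopologicalSpace X] [SMul T X]
    (g : X → X) : Set (X → X) :=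
  (fun f => f ∘ g) '' Ellis T X

section Aux

set_option linter.unusedSectionVars false
set_option linter.unusedVariables false

open Set Filter

variable {T : Type*} [Group T] {X : Type*} [MetricSpace X] [CompactSpace X] [MulAction T X]

lemma rho_cont (g : X → X) : Continuous fun f : X → X => f ∘ g :=
  continuous_pi fun x => continuous_apply (g x)

lemma smul_mem_ellis (t : T) : (fun x : X => t • x) ∈ Ellis T X :=
  subset_closure ⟨t, rfl⟩

lemma id_mem_ellis : (id : X → X) ∈ Ellis T X := by
  have h : (fun x : X => (1 : T) • x) = (id : X → X) := by funext x; simp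
  exact h ▸ smul_mem_ellis 1

lemma ellis_isClosed : IsClosed (Ellis T X) := isClosed_closure

lemma ellis_compact : IsCompact (Ellis T X) := (ellis_isClosed (T := T)).isCompact

lemma comp_mem_ellis (hcont : ∀ t : T, Continuous fun x : X => t • x)
    {f g : X → X} (hf : f ∈ Ellis T X) (hg : g ∈ Ellis T X) : f ∘ g ∈ Ellis T X := by
  set R : Set (X → X) := Set.range (fun t : T => fun x : X => t • x) with hR
  have hstep : ∀ t : T, (fun x : X => t • x) ∘ g ∈ Ellis T X := by
    intro t
    have hL : Continuous fun h : X → X => (fun x : X => t • x) ∘ h :=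
      continuous_pi fun x => (hcont t).comp (continuous_apply x)
    have h1 : (fun h : X → X => (fun x : X => t • x) ∘ h) '' R ⊆ R := by
      rintro _ ⟨_, ⟨s, rfl⟩, rfl⟩
      exact ⟨t * s, by funext x; simp [mul_smul]⟩
    have h2 : (fun x : X => t • x) ∘ g ∈
        closure ((fun h : X → X => (fun x : X => t • x) ∘ h) '' R) :=
      image_closure_subset_closure_image hL ⟨g, hg, rfl⟩
    exact closure_mono h1 h2
  have h3 : f ∘ g ∈ closure ((fun h : X → X => h ∘ g) '' R) :=
    image_closure_subset_closure_image (rho_cont g) ⟨f, hf, rfl⟩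
  have h4 : (fun h : X → X => h ∘ g) '' R ⊆ Ellis T X := by
    rintro _ ⟨_, ⟨t, rfl⟩, rfl⟩
    exact hstep t
  have h5 : closure ((fun h : X → X => h ∘ g) '' R) ⊆ Ellis T X := by
    rw [show (Ellis T X) = closure (Ellis T X) from (ellis_isClosed (T := T)).closure_eq.symm]
    exact closure_mono h4
  exact h5 h3

lemma lset_spec (hcont : ∀ t : T, Continuous fun x : X => t • x)
    {g : X → X} (hg : g ∈ Ellis T X) :
    LIdeal T (lset T g) ∧ IsClosed (lset T g) ∧ g ∈ lset T g := by
  refine ⟨⟨?_, ?_, ?_⟩, ?_, ?_⟩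
  · rintro _ ⟨f, hf, rfl⟩
    exact comp_mem_ellis hcont hf hg
  · exact ⟨g, ⟨id, id_mem_ellis, rfl⟩⟩
  · rintro f hf _ ⟨m, hm, rfl⟩
    exact ⟨f ∘ m, comp_mem_ellis hcont hf hm, rfl⟩
  · exact ((ellis_compact (T := T)).image (rho_cont g)).isClosed
  · exact ⟨id, id_mem_ellis, rfl⟩

/-- Ellis–Numakura: a nonempty compact subsemigroup contains an idempotent. -/
lemma exists_idem_of_semigroup {S : Set (X → X)} (hne : S.Nonempty) (hcl : IsClosed S)
    (hmul : ∀ f ∈ S, ∀ g ∈ S, f ∘ g ∈ S) : ∃ p ∈ S, p ∘ p = p := by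
  set 𝒜 : Set (Set (X → X)) :=
    {A | A ⊆ S ∧ A.Nonempty ∧ IsClosed A ∧ ∀ f ∈ A, ∀ g ∈ A, f ∘ g ∈ A} with h𝒜
  have hS𝒜 : S ∈ 𝒜 := ⟨Subset.rfl, hne, hcl, hmul⟩
  have hlb : ∀ c ⊆ 𝒜, IsChain (· ⊆ ·) c → c.Nonempty →
      ∃ lb ∈ 𝒜, ∀ s ∈ c, lb ⊆ s := by
    intro c hc𝒜 hchain hcne
    refine ⟨⋂₀ c, ⟨?_, ?_, ?_, ?_⟩, fun s hs => sInter_subset_of_mem hs⟩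
    · obtain ⟨s, hs⟩ := hcne
      exact (sInter_subset_of_mem hs).trans (hc𝒜 hs).1
    · haveI : Nonempty c := hcne.to_subtype
      apply IsCompact.nonempty_sInter_of_directed_nonempty_isCompact_isClosed
      · intro s hs t ht
        rcases eq_or_ne s t with rfl | hst
        · exact ⟨s, hs, Subset.rfl, Subset.rfl⟩
        · rcases hchain hs ht hst with h | h
          · exact ⟨s, hs, Subset.rfl, h⟩
          · exact ⟨t, ht, h, Subset.rfl⟩
      · exact fun U hU => (hc𝒜 hU).2.1
      · exact fun U hU => (hc𝒜 hU).2.2.1.isCompact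
      · exact fun U hU => (hc𝒜 hU).2.2.1
    · exact isClosed_sInter fun s hs => (hc𝒜 hs).2.2.1
    · intro f hf g hg
      rw [mem_sInter] at *
      intro A hA
      exact (hc𝒜 hA).2.2.2 f (hf A hA) g (hg A hA)
  obtain ⟨M, -, hMmin⟩ := zorn_superset_nonempty 𝒜 hlb S hS𝒜
  have hM𝒜 : M ∈ 𝒜 := hMmin.1
  obtain ⟨a, haM⟩ := hM𝒜.2.1
  have hMcpt : IsCompact M := hM𝒜.2.2.1.isCompact
  have himgsub : (fun f => f ∘ a) '' M ⊆ M := by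
    rintro _ ⟨f, hf, rfl⟩
    exact hM𝒜.2.2.2 f hf a haM
  have himg : (fun f => f ∘ a) '' M ∈ 𝒜 := by
    refine ⟨himgsub.trans hM𝒜.1, ⟨a ∘ a, ⟨a, haM, rfl⟩⟩,
      (hMcpt.image (rho_cont a)).isClosed, ?_⟩
    rintro _ ⟨f, hf, rfl⟩ _ ⟨g, hg, rfl⟩
    exact ⟨(f ∘ a) ∘ g, hM𝒜.2.2.2 (f ∘ a) (himgsub ⟨f, hf, rfl⟩) g hg, rfl⟩
  have hMeq : (fun f => f ∘ a) '' M = M :=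
    Subset.antisymm himgsub (hMmin.2 himg himgsub)
  have haimg : a ∈ (fun f => f ∘ a) '' M := hMeq.symm ▸ haM
  obtain ⟨b, hbM, hba⟩ := haimg
  set B : Set (X → X) := {f ∈ M | f ∘ a = a} with hB
  have hB𝒜 : B ∈ 𝒜 := by
    refine ⟨fun f hf => hM𝒜.1 hf.1, ⟨b, hbM, hba⟩, ?_, ?_⟩
    · have hBeq : B = M ∩ (fun f => f ∘ a) ⁻¹' {a} := by
        ext f
        simp [hB, Set.mem_preimage]
      rw [hBeq]
      exact hM𝒜.2.2.1.inter (isClosed_singleton.preimage (rho_cont a))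
    · rintro f ⟨hfM, hfa⟩ g ⟨hgM, hga⟩
      refine ⟨hM𝒜.2.2.2 f hfM g hgM, ?_⟩
      show f ∘ (g ∘ a) = a
      rw [hga, hfa]
  have hBsub : B ⊆ M := fun f hf => hf.1
  have hBeq : B = M := Subset.antisymm hBsub (hMmin.2 hB𝒜 hBsub)
  have haB : a ∈ B := hBeq.symm ▸ haM
  exact ⟨a, hM𝒜.1 haM, haB.2⟩

/-- Every closed left ideal contains a minimal left ideal, which is closed. -/
lemma exists_minL (hcont : ∀ t : T, Continuous fun x : X => t • x)
    {C : Set (X → X)} (hC : LIdeal T C) (hCcl : IsClosed C) :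
    ∃ M, M ⊆ C ∧ MinLIdeal T M ∧ IsClosed M := by
  set 𝒮 : Set (Set (X → X)) := {I | I ⊆ C ∧ LIdeal T I ∧ IsClosed I} with h𝒮
  have hC𝒮 : C ∈ 𝒮 := ⟨Subset.rfl, hC, hCcl⟩
  have hlb : ∀ c ⊆ 𝒮, IsChain (· ⊆ ·) c → c.Nonempty →
      ∃ lb ∈ 𝒮, ∀ s ∈ c, lb ⊆ s := by
    intro c hc𝒮 hchain hcne
    refine ⟨⋂₀ c, ⟨?_, ⟨?_, ?_, ?_⟩, ?_⟩, fun s hs => sInter_subset_of_mem hs⟩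
    · obtain ⟨s, hs⟩ := hcne
      exact (sInter_subset_of_mem hs).trans (hc𝒮 hs).1
    · obtain ⟨s, hs⟩ := hcne
      exact (sInter_subset_of_mem hs).trans (hc𝒮 hs).2.1.1
    · haveI : Nonempty c := hcne.to_subtype
      apply IsCompact.nonempty_sInter_of_directed_nonempty_isCompact_isClosed
      · intro s hs t ht
        rcases eq_or_ne s t with rfl | hst
        · exact ⟨s, hs, Subset.rfl, Subset.rfl⟩
        · rcases hchain hs ht hst with h | h
          · exact ⟨s, hs, Subset.rfl, h⟩
          · exact ⟨t, ht, h, Subset.rfl⟩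
      · exact fun U hU => (hc𝒮 hU).2.1.2.1
      · exact fun U hU => (hc𝒮 hU).2.2.isCompact
      · exact fun U hU => (hc𝒮 hU).2.2
    · intro f hf g hg
      rw [mem_sInter] at *
      intro A hA
      exact (hc𝒮 hA).2.1.2.2 f hf g (hg A hA)
    · exact isClosed_sInter fun s hs => (hc𝒮 hs).2.2
  obtain ⟨M, hMC, hMmin⟩ := zorn_superset_nonempty 𝒮 hlb C hC𝒮
  have hM𝒮 : M ∈ 𝒮 := hMmin.1
  refine ⟨M, hM𝒮.1, ⟨hM𝒮.2.1, ?_⟩, hM𝒮.2.2⟩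
  intro I hI hIM
  obtain ⟨g, hgI⟩ := hI.2.1
  have hgE : g ∈ Ellis T X := hI.1 hgI
  obtain ⟨hls, hlscl, -⟩ := lset_spec hcont hgE
  have h1 : lset T g ⊆ I := by
    rintro _ ⟨f, hf, rfl⟩
    exact hI.2.2 f hf g hgI
  have h2 : lset T g ∈ 𝒮 := ⟨(h1.trans hIM).trans hM𝒮.1, hls, hlscl⟩
  have h3 : M ⊆ lset T g := hMmin.2 h2 (h1.trans hIM)
  exact Subset.antisymm hIM (h3.trans h1)

/-- The image of a minimal left ideal under right translation is a minimal left ideal. -/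
lemma image_minL (hcont : ∀ t : T, Continuous fun x : X => t • x)
    {M : Set (X → X)} {g : X → X} (hM : MinLIdeal T M) (hMcl : IsClosed M)
    (hg : g ∈ Ellis T X) :
    MinLIdeal T ((fun f => f ∘ g) '' M) ∧ IsClosed ((fun f => f ∘ g) '' M) := by
  have hLI : LIdeal T ((fun f => f ∘ g) '' M) := by
    refine ⟨?_, hM.1.2.1.image _, ?_⟩
    · rintro _ ⟨f, hf, rfl⟩
      exact comp_mem_ellis hcont (hM.1.1 hf) hg
    · rintro f hfE _ ⟨m, hm, rfl⟩
      exact ⟨f ∘ m, hM.1.2.2 f hfE m hm, rfl⟩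
  refine ⟨⟨hLI, ?_⟩, (hMcl.isCompact.image (rho_cont g)).isClosed⟩
  intro I hI hIsub
  obtain ⟨i, hiI⟩ := hI.2.1
  set J : Set (X → X) := {f ∈ M | f ∘ g ∈ I} with hJ
  have hJ_LI : LIdeal T J := by
    refine ⟨fun f hf => hM.1.1 hf.1, ?_, ?_⟩
    · obtain ⟨f0, hf0, hf0i⟩ := hIsub hiI
      have hf0i' : f0 ∘ g = i := hf0i
      exact ⟨f0, hf0, hf0i'.symm ▸ hiI⟩
    · rintro f hfE m ⟨hmM, hmI⟩
      exact ⟨hM.1.2.2 f hfE m hmM, hI.2.2 f hfE (m ∘ g) hmI⟩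
  have hJM : J = M := hM.2 J hJ_LI fun f hf => hf.1
  have himg : (fun f => f ∘ g) '' M ⊆ I := by
    rintro _ ⟨m, hm, rfl⟩
    have hmJ : m ∈ J := hJM.symm ▸ hm
    exact hmJ.2
  exact Subset.antisymm hIsub himg

/-- For a minimal idempotent `e`, `E ∘ e` is a minimal left ideal containing `e`. -/
lemma minIdem_lset (hcont : ∀ t : T, Continuous fun x : X => t • x)
    {e : X → X} (he : IsMinIdem (Ellis T X) e) :
    MinLIdeal T (lset T e) ∧ IsClosed (lset T e) ∧ e ∈ lset T e := by
  have hEL : LIdeal T (Ellis T X) :=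
    ⟨Subset.rfl, ⟨id, id_mem_ellis⟩, fun f hf g hg => comp_mem_ellis hcont hf hg⟩
  obtain ⟨M₀, -, hM₀, hM₀cl⟩ := exists_minL hcont hEL (ellis_isClosed (T := T))
  set J : Set (X → X) := {h | ∃ f ∈ M₀, ∃ g ∈ Ellis T X, f ∘ g = h} with hJdef
  have hJ : IsIdealIn (Ellis T X) J := by
    refine ⟨?_, ?_, ?_⟩
    · rintro h ⟨f, hf, g, hg, rfl⟩
      exact comp_mem_ellis hcont (hM₀.1.1 hf) hg
    · obtain ⟨f, hf⟩ := hM₀.1.2.1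
      exact ⟨f ∘ id, f, hf, id, id_mem_ellis, rfl⟩
    · rintro f hfE h ⟨m, hm, g, hg, rfl⟩
      constructor
      · exact ⟨f ∘ m, hM₀.1.2.2 f hfE m hm, g, hg, rfl⟩
      · exact ⟨m, hm, g ∘ f, comp_mem_ellis hcont hg hfE, rfl⟩
  obtain ⟨m, hm, h, hh, hmh⟩ := he.2.2 J hJ
  obtain ⟨hN, hNcl⟩ := image_minL hcont hM₀ hM₀cl hh
  have heN : e ∈ (fun f => f ∘ h) '' M₀ := ⟨m, hm, hmh⟩
  have h1 : lset T e ⊆ (fun f => f ∘ h) '' M₀ := by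
    rintro _ ⟨f, hf, rfl⟩
    exact hN.1.2.2 f hf e heN
  obtain ⟨hls, hlscl, hels⟩ := lset_spec hcont he.1
  have h2 : lset T e = (fun f => f ∘ h) '' M₀ := hN.2 _ hls h1
  refine ⟨?_, hlscl, hels⟩
  rw [h2]
  exact hN

/-- An idempotent in a minimal left ideal is a minimal idempotent. -/
lemma isMinIdem_of_mem_minL (hcont : ∀ t : T, Continuous fun x : X => t • x)
    {M : Set (X → X)} {p : X → X} (hM : MinLIdeal T M) (hpM : p ∈ M)
    (hpi : p ∘ p = p) : IsMinIdem (Ellis T X) p := by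
  refine ⟨hM.1.1 hpM, hpi, ?_⟩
  intro I hI
  set I' : Set (X → X) := {h | ∃ i ∈ I, i ∘ p = h} with hI'def
  have hI' : LIdeal T I' := by
    refine ⟨?_, ?_, ?_⟩
    · rintro _ ⟨i, hi, rfl⟩
      exact comp_mem_ellis hcont (hI.1 hi) (hM.1.1 hpM)
    · obtain ⟨i, hi⟩ := hI.2.1
      exact ⟨i ∘ p, i, hi, rfl⟩
    · rintro f hfE _ ⟨i, hi, rfl⟩
      exact ⟨f ∘ i, (hI.2.2 f hfE i hi).1, rfl⟩
  have hsub : I' ⊆ M := by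
    rintro _ ⟨i, hi, rfl⟩
    exact hM.1.2.2 i (hI.1 hi) p hpM
  have heq : I' = M := hM.2 I' hI' hsub
  have hpI' : p ∈ I' := heq.symm ▸ hpM
  obtain ⟨i, hi, hip⟩ := hpI'
  have hipI : i ∘ p ∈ I := (hI.2.2 p (hM.1.1 hpM) i hi).2
  exact hip ▸ hipI

/-- In a minimal left ideal, any element absorbs idempotents on the right. -/
lemma idem_absorb (hcont : ∀ t : T, Continuous fun x : X => t • x)
    {M : Set (X → X)} {α β : X → X} (hM : MinLIdeal T M) (hα : α ∈ M) (hβ : β ∈ M)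
    (hβi : β ∘ β = β) : α ∘ β = α := by
  have h1 : lset T β ⊆ M := by
    rintro _ ⟨f, hf, rfl⟩
    exact hM.1.2.2 f hf β hβ
  have heq : lset T β = M := hM.2 _ (lset_spec hcont (hM.1.1 hβ)).1 h1
  have hαls : α ∈ lset T β := heq.symm ▸ hα
  obtain ⟨m, hm, hmβ⟩ := hαls
  have h2 : ∀ y, α y = m (β y) := fun y => (congrFun hmβ y).symm
  funext x
  show α (β x) = α x
  have hββ : β (β x) = β x := congrFun hβi x
  rw [h2 (β x), h2 x, hββ]

/-- Minimality of `X`: nonempty closed invariant sets are everything. -/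
lemma closed_invariant_eq_univ (hmin : ∀ x : X, Dense (MulAction.orbit T x))
    {S : Set X} (hne : S.Nonempty) (hcl : IsClosed S)
    (hinv : ∀ t : T, ∀ x ∈ S, t • x ∈ S) : S = Set.univ := by
  obtain ⟨s, hs⟩ := hne
  have horb : MulAction.orbit T s ⊆ S := by
    rintro _ ⟨t, rfl⟩
    exact hinv t s hs
  apply Set.eq_univ_of_univ_subset
  calc Set.univ = closure (MulAction.orbit T s) := ((hmin s).closure_eq).symm
    _ ⊆ closure S := closure_mono horb
    _ = S := hcl.closure_eq

/-- In each closed minimal left ideal there is an idempotent fixing a given point. -/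
lemma exists_idem_fixing (hcont : ∀ t : T, Continuous fun x : X => t • x)
    (hmin : ∀ x : X, Dense (MulAction.orbit T x))
    {M : Set (X → X)} (hM : MinLIdeal T M) (hMcl : IsClosed M) (x : X) :
    ∃ p ∈ M, p ∘ p = p ∧ p x = x := by
  have hMx : (fun f : X → X => f x) '' M = Set.univ := by
    apply closed_invariant_eq_univ hmin
    · exact hM.1.2.1.image _
    · exact (hMcl.isCompact.image (continuous_apply x)).isClosed
    · rintro t _ ⟨f, hf, rfl⟩
      exact ⟨(fun y : X => t • y) ∘ f, hM.1.2.2 _ (smul_mem_ellis t) f hf, rfl⟩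
  have hx : x ∈ (fun f : X → X => f x) '' M := hMx ▸ Set.mem_univ x
  obtain ⟨f₀, hf₀, hf₀x⟩ := hx
  have hBne : ({f ∈ M | f x = x} : Set (X → X)).Nonempty := ⟨f₀, hf₀, hf₀x⟩
  have hBcl : IsClosed {f ∈ M | f x = x} := by
    have hBeq : {f ∈ M | f x = x} = M ∩ (fun f : X → X => f x) ⁻¹' {x} := by
      ext f
      simp [Set.mem_preimage]
    rw [hBeq]
    exact hMcl.inter (isClosed_singleton.preimage (continuous_apply x))
  have hBmul : ∀ f ∈ {f ∈ M | f x = x}, ∀ g ∈ {f ∈ M | f x = x},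
      f ∘ g ∈ {f ∈ M | f x = x} := by
    rintro f ⟨hfM, hfx⟩ g ⟨hgM, hgx⟩
    refine ⟨hM.1.2.2 f (hM.1.1 hfM) g hgM, ?_⟩
    show f (g x) = x
    rw [hgx, hfx]
  obtain ⟨p, hpB, hpi⟩ := exists_idem_of_semigroup hBne hBcl hBmul
  exact ⟨p, hpB.1, hpi, hpB.2⟩

/-- Easy direction: an element of the Ellis semigroup collapsing two points witnesses
proximality. -/
lemma prox_of_witness {q : X → X} (hq : q ∈ Ellis T X) {a b : X} (h : q a = q b) :
    Proximal T a b := by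
  intro ε hε
  set U : Set (X → X) := ((fun f : X → X => f a) ⁻¹' Metric.ball (q a) (ε / 2)) ∩
    ((fun f : X → X => f b) ⁻¹' Metric.ball (q b) (ε / 2)) with hU
  have hUopen : IsOpen U :=
    (Metric.isOpen_ball.preimage (continuous_apply a)).inter
      (Metric.isOpen_ball.preimage (continuous_apply b))
  have hqU : q ∈ U := by
    constructor <;> · show _ ∈ Metric.ball _ _; rw [Metric.mem_ball, dist_self]; positivity
  have hq' : q ∈ closure (Set.range fun t : T => fun x : X => t • x) := hq
  obtain ⟨f, hfU, hfR⟩ := mem_closure_iff.mp hq' U hUopen hqU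
  obtain ⟨t, rfl⟩ := hfR
  refine ⟨t, ?_⟩
  have h1 : dist (t • a) (q a) < ε / 2 := Metric.mem_ball.mp hfU.1
  have h2 : dist (t • b) (q b) < ε / 2 := Metric.mem_ball.mp hfU.2
  have h3 : dist (q a) (t • b) < ε / 2 := by
    rw [h, dist_comm]
    exact h2
  have h4 : dist (t • a) (t • b) ≤ dist (t • a) (q a) + dist (q a) (t • b) :=
    dist_triangle _ _ _
  linarith

/-- Hard direction: proximal points are collapsed by some element of the Ellis semigroup. -/
lemma prox_witness {a b : X} (h : Proximal T a b) :
    ∃ q ∈ Ellis T X, q a = q b := by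
  have hsel : ∀ n : ℕ, ∃ t : T, dist (t • a) (t • b) < 1 / ((n : ℝ) + 1) := by
    intro n
    exact h (1 / ((n : ℝ) + 1)) (by positivity)
  choose t ht using hsel
  set g : ℕ → (X → X) := fun n => fun x => t n • x with hg
  have hmap : Filter.map g Filter.atTop ≤ Filter.principal (Ellis T X) := by
    rw [Filter.le_principal_iff, Filter.mem_map]
    exact Filter.univ_mem' fun n => smul_mem_ellis (t n)
  obtain ⟨q, hqE, hq⟩ := (ellis_compact (T := T)).exists_clusterPt hmap
  refine ⟨q, hqE, ?_⟩
  by_contra hne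
  have hd : 0 < dist (q a) (q b) := dist_pos.mpr hne
  obtain ⟨N, hN⟩ := exists_nat_one_div_lt (show (0 : ℝ) < dist (q a) (q b) / 3 by linarith)
  set U : Set (X → X) := ((fun f : X → X => f a) ⁻¹' Metric.ball (q a) (dist (q a) (q b) / 3)) ∩
    ((fun f : X → X => f b) ⁻¹' Metric.ball (q b) (dist (q a) (q b) / 3)) with hU
  have hUopen : IsOpen U :=
    (Metric.isOpen_ball.preimage (continuous_apply a)).inter
      (Metric.isOpen_ball.preimage (continuous_apply b))
  have hqU : q ∈ U := by
    constructor <;> · show _ ∈ Metric.ball _ _; rw [Metric.mem_ball, dist_self]; linarith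
  have hUnhds : U ∈ nhds q := hUopen.mem_nhds hqU
  have hV : g '' Set.Ici N ∈ Filter.map g Filter.atTop := by
    rw [Filter.mem_map]
    exact Filter.mem_of_superset (Filter.Ici_mem_atTop N) fun n hn => Set.mem_image_of_mem g hn
  obtain ⟨f, hfU, hfV⟩ := clusterPt_iff_nonempty.mp hq hUnhds hV
  obtain ⟨n, hnN, rfl⟩ := hfV
  have h1 : dist (g n a) (g n b) < 1 / ((n : ℝ) + 1) := ht n
  have h2 : (1 : ℝ) / ((n : ℝ) + 1) ≤ 1 / ((N : ℝ) + 1) := by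
    apply one_div_le_one_div_of_le
    · positivity
    · have : (N : ℝ) ≤ (n : ℝ) := Nat.cast_le.mpr hnN
      linarith
  have h3 : dist (q a) (q b) ≤ dist (q a) (g n a) + dist (g n a) (g n b) + dist (g n b) (q b) :=
    dist_triangle4 _ _ _ _
  have h4 : dist (g n a) (q a) < dist (q a) (q b) / 3 := Metric.mem_ball.mp hfU.1
  have h5 : dist (g n b) (q b) < dist (q a) (q b) / 3 := Metric.mem_ball.mp hfU.2
  rw [dist_comm (g n a) (q a)] at h4
  linarith

/-- Claim B: two `e`-fixed points collapsed by some element of `E` are equal. -/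
lemma eq_of_fixed_witness (hcont : ∀ t : T, Continuous fun x : X => t • x)
    {e : X → X} (he : IsMinIdem (Ellis T X) e) {a b : X}
    (ha : e a = a) (hb : e b = b) {q : X → X} (hqE : q ∈ Ellis T X)
    (hq : q a = q b) : a = b := by
  obtain ⟨hL, hLcl, heL⟩ := minIdem_lset hcont he
  have hqe : q ∘ e ∈ lset T e := ⟨q, hqE, rfl⟩
  have h1 : lset T (q ∘ e) ⊆ lset T e := by
    rintro _ ⟨f, hf, rfl⟩
    exact hL.1.2.2 f hf _ hqe
  have h2 : lset T (q ∘ e) = lset T e :=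
    hL.2 _ (lset_spec hcont (hL.1.1 hqe)).1 h1
  have heqe : e ∈ lset T (q ∘ e) := h2.symm ▸ heL
  obtain ⟨m, hm, hme⟩ := heqe
  have key : ∀ y, e y = m (q (e y)) := fun y => (congrFun hme y).symm
  calc a = e a := ha.symm
    _ = m (q (e a)) := key a
    _ = m (q a) := by rw [ha]
    _ = m (q b) := by rw [hq]
    _ = m (q (e b)) := by rw [hb]
    _ = e b := (key b).symm
    _ = b := hb

/-- Key uniqueness lemma: if all generators of the little structure group are trivial,
then `e` belongs to every (closed) minimal left ideal. -/
lemma mem_of_gens (hcont : ∀ t : T, Continuous fun x : X => t • x)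
    (hmin : ∀ x : X, Dense (MulAction.orbit T x))
    {e : X → X} (he : IsMinIdem (Ellis T X) e)
    (hgens : ∀ p : X → X, IsMinIdem (Ellis T X) p → e ∘ p ∘ e = e)
    {M : Set (X → X)} (hM : MinLIdeal T M) (hMcl : IsClosed M) : e ∈ M := by
  obtain ⟨hL, hLcl, heL⟩ := minIdem_lset hcont he
  have heE : e ∈ Ellis T X := he.1
  have heidem : ∀ y, e (e y) = e y := fun y => congrFun he.2.1 y
  -- Step 1: find `g₀ ∈ M` with `g₀ ∘ e = e`.
  obtain ⟨hN, hNcl⟩ := image_minL hcont hM hMcl heE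
  have h1 : (fun f => f ∘ e) '' M ⊆ lset T e := by
    rintro _ ⟨f, hf, rfl⟩
    exact ⟨f, hM.1.1 hf, rfl⟩
  have h2 : (fun f => f ∘ e) '' M = lset T e := hL.2 _ hN.1 h1
  have heimg : e ∈ (fun f => f ∘ e) '' M := h2.symm ▸ heL
  obtain ⟨g₀, hg₀M, hg₀e⟩ := heimg
  -- Step 2: idempotent `f₀ ∈ M` with `f₀ ∘ e = e`.
  have hBne : ({g ∈ M | g ∘ e = e} : Set (X → X)).Nonempty := ⟨g₀, hg₀M, hg₀e⟩
  have hBcl : IsClosed {g ∈ M | g ∘ e = e} := by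
    have hBeq : {g ∈ M | g ∘ e = e} = M ∩ (fun f => f ∘ e) ⁻¹' {e} := by
      ext f
      simp [Set.mem_preimage]
    rw [hBeq]
    exact hMcl.inter (isClosed_singleton.preimage (rho_cont e))
  have hBmul : ∀ f ∈ {g ∈ M | g ∘ e = e}, ∀ g ∈ {g ∈ M | g ∘ e = e},
      f ∘ g ∈ {g ∈ M | g ∘ e = e} := by
    rintro f ⟨hfM, hfe⟩ g ⟨hgM, hge⟩
    refine ⟨hM.1.2.2 f (hM.1.1 hfM) g hgM, ?_⟩
    show f ∘ (g ∘ e) = e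
    rw [hge, hfe]
  obtain ⟨f₀, hf₀B, hf₀i⟩ := exists_idem_of_semigroup hBne hBcl hBmul
  have hf₀M : f₀ ∈ M := hf₀B.1
  have hf₀e : f₀ ∘ e = e := hf₀B.2
  -- Step 3: `f' := e ∘ f₀ ∈ M` satisfies `f' ∘ e = e` pointwise.
  have hf'M : e ∘ f₀ ∈ M := hM.1.2.2 e heE f₀ hf₀M
  have hf'e : ∀ y, (e ∘ f₀) (e y) = e y := by
    intro y
    show e (f₀ (e y)) = e y
    have h' : f₀ (e y) = e y := congrFun hf₀e y
    rw [h']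
    exact heidem y
  -- Step 4: `∀ x, (e ∘ f₀) x = e x`.
  have hmain : ∀ x, (e ∘ f₀) x = e x := by
    intro x
    obtain ⟨p₁, hp₁M, hp₁i, hp₁x⟩ := exists_idem_fixing hcont hmin hM hMcl x
    have hp₁min : IsMinIdem (Ellis T X) p₁ := isMinIdem_of_mem_minL hcont hM hp₁M hp₁i
    have hgp : ∀ y, e (p₁ (e y)) = e y := fun y => congrFun (hgens p₁ hp₁min) y
    have hqM : e ∘ p₁ ∈ M := hM.1.2.2 e heE p₁ hp₁M
    have hqi : (e ∘ p₁) ∘ (e ∘ p₁) = e ∘ p₁ := by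
      funext y
      show e (p₁ (e (p₁ y))) = e (p₁ y)
      exact hgp (p₁ y)
    have habs : (e ∘ f₀) ∘ (e ∘ p₁) = e ∘ f₀ := idem_absorb hcont hM hf'M hqM hqi
    have h3 : (e ∘ f₀) ((e ∘ p₁) x) = (e ∘ f₀) x := congrFun habs x
    have h4 : (e ∘ p₁) x = e x := by
      show e (p₁ x) = e x
      rw [hp₁x]
    calc (e ∘ f₀) x = (e ∘ f₀) ((e ∘ p₁) x) := h3.symm
      _ = (e ∘ f₀) (e x) := by rw [h4]
      _ = e x := hf'e x
  have hfinal : e ∘ f₀ = e := funext hmain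
  exact hfinal ▸ hf'M

end Aux

/-- For a minimal system `(X,T)`, the proximal relation is transitive iff the little
structure group `Γ_e` is trivial, i.e. all its generators `e ∘ p ∘ e` (`p` a minimal
idempotent) equal `e`. -/
theorem stmt9 {T : Type*} [Group T] {X : Type*} [MetricSpace X] [CompactSpace X]
    [MulAction T X]
    (hcont : ∀ t : T, Continuous fun x : X => t • x)
    (hmin : ∀ x : X, Dense (MulAction.orbit T x))
    (e : X → X) (he : IsMinIdem (Ellis T X) e) :
    Transitive (fun x y : X => Proximal T x y) ↔
      (∀ p : X → X, IsMinIdem (Ellis T X) p → e ∘ p ∘ e = e) := by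
  constructor
  · -- transitive ⟹ generators trivial
    intro htrans p hp
    funext x
    show e (p (e x)) = e x
    have heidem : ∀ y, e (e y) = e y := fun y => congrFun he.2.1 y
    have hpidem : ∀ y, p (p y) = p y := fun y => congrFun hp.2.1 y
    have h1 : Proximal T (e x) (p (e x)) := prox_of_witness hp.1 (hpidem (e x)).symm
    have h2 : Proximal T (p (e x)) (e (p (e x))) :=
      prox_of_witness he.1 (heidem (p (e x))).symm
    have h3 : Proximal T (e x) (e (p (e x))) := htrans h1 h2
    obtain ⟨q, hqE, hq⟩ := prox_witness h3
    exact (eq_of_fixed_witness hcont he (heidem x) (heidem (p (e x))) hqE hq).symm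
  · -- generators trivial ⟹ transitive
    intro hgens x y z hxy hyz
    obtain ⟨q₁, hq₁E, hq₁⟩ := prox_witness hxy
    obtain ⟨q₂, hq₂E, hq₂⟩ := prox_witness hyz
    have key : ∀ q : X → X, q ∈ Ellis T X → ∃ m ∈ Ellis T X, m ∘ q = e := by
      intro q hqE
      obtain ⟨hLI, hcl, -⟩ := lset_spec hcont hqE
      obtain ⟨M, hMsub, hMmin, hMcl⟩ := exists_minL hcont hLI hcl
      have heM : e ∈ M := mem_of_gens hcont hmin he hgens hMmin hMcl
      obtain ⟨m, hmE, hme⟩ := hMsub heM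
      exact ⟨m, hmE, hme⟩
    obtain ⟨m₁, hm₁E, hm₁⟩ := key q₁ hq₁E
    obtain ⟨m₂, hm₂E, hm₂⟩ := key q₂ hq₂E
    have h1 : e x = e y := by
      calc e x = m₁ (q₁ x) := (congrFun hm₁ x).symm
        _ = m₁ (q₁ y) := by rw [hq₁]
        _ = e y := congrFun hm₁ y
    have h2 : e y = e z := by
      calc e y = m₂ (q₂ y) := (congrFun hm₂ y).symm
        _ = m₂ (q₂ z) := by rw [hq₂]
        _ = e z := congrFun hm₂ z
    exact prox_of_witness he.1 (h1.trans h2)
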